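/- Let (N, K_min, v) be a minimal incomplete game with total excess Δ ≥ 0 and n ≥ 3 players, let ṽ = (1/n) Σ_{i∈N} v^i be the centre of gravity of the extreme games and ẽ = (1/|E|) Σ_{T∈E} e_T the centre of gravity of the extreme rays, where E = 2^N ∖ ({∅, N} ∪ {{i} : i ∈ N} ∪ {N∖{i} : i ∈ N}). Then the conic τ-value satisfies τ_i(ṽ + ẽ) = v({i}) + Δ/n for every i ∈ N. -/

import Mathlib

noncomputable section

open Finset

/-- The upper (utopia) vector `b^w` of a cooperative game `w` on `N = {1,…,n}`. -/
def bvec (n : ℕ) (w : Finset (Fin n) → ℝ) (i : Fin n) : ℝ :=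
  w Finset.univ - w (Finset.univ \ {i})

/-- A cooperative game `w` is 1-convex: for every nonempty coalition `S`,
`w S ≤ w N - b^w(N \ S)`, and `b^w(N) ≥ w N`. -/
def OneConvex (n : ℕ) (w : Finset (Fin n) → ℝ) : Prop :=
  (∀ S : Finset (Fin n), S.Nonempty →
      w S ≤ w Finset.univ - ∑ i ∈ Finset.univ \ S, bvec n w i) ∧
  w Finset.univ ≤ ∑ i : Fin n, bvec n w i

/-- The set of 1-convex extensions of an incomplete game `(N, K, v)`:
cooperative games (`w ∅ = 0`) that are 1-convex and agree with `v` on `K`. -/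
def Cext (n : ℕ) (K : Finset (Finset (Fin n))) (v : Finset (Fin n) → ℝ) :
    Set (Finset (Fin n) → ℝ) :=
  {w | w ∅ = 0 ∧ OneConvex n w ∧ ∀ S ∈ K, w S = v S}

/-- `K_min`: the empty coalition, the grand coalition and all singletons. -/
def KminF (n : ℕ) : Finset (Finset (Fin n)) :=
  {∅, Finset.univ} ∪ Finset.univ.image (fun i => ({i} : Finset (Fin n)))

/-- The total excess `Δ = v(N) - ∑_{i ∈ N} v({i})`. -/
def totalExcess (n : ℕ) (v : Finset (Fin n) → ℝ) : ℝ :=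
  v Finset.univ - ∑ i : Fin n, v {i}

/-- A minimal incomplete game (only the values on `K_min` are relevant) that is
1-convex-extendable, i.e. `v ∅ = 0` and `Δ ≥ 0`. -/
def MinExtendable (n : ℕ) (v : Finset (Fin n) → ℝ) : Prop :=
  v ∅ = 0 ∧ 0 ≤ totalExcess n v

/-- The extreme games `v^i` of the set of 1-convex extensions of a minimal
incomplete game. -/
def extGame (n : ℕ) (v : Finset (Fin n) → ℝ) (i : Fin n) (S : Finset (Fin n)) : ℝ :=
  if S ∈ KminF n then v S
  else if i ∈ S then v Finset.univ - ∑ j ∈ Finset.univ \ S, v {j}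
  else v Finset.univ - ∑ j ∈ Finset.univ \ S, v {j} - totalExcess n v

/-- The upper game of the set of 1-convex extensions of a minimal incomplete game. -/
def upperGameMin (n : ℕ) (v : Finset (Fin n) → ℝ) (S : Finset (Fin n)) : ℝ :=
  if S ∈ KminF n then v S else v Finset.univ - ∑ i ∈ Finset.univ \ S, v {i}

/-- The index set `E = 2^N \ ({∅, N} ∪ {{i}} ∪ {N \ {i}})` of extreme rays. -/
def ESetMin (n : ℕ) : Finset (Finset (Fin n)) :=
  Finset.univ \
    (KminF n ∪ Finset.univ.image (fun i => Finset.univ \ ({i} : Finset (Fin n))))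

/-- The extreme-ray game `e_T`: value `-1` on `T` and `0` elsewhere. -/
def eRay (n : ℕ) (T S : Finset (Fin n)) : ℝ := if S = T then -1 else 0

/-- The centre of gravity `ṽ = (1/n) ∑_i v^i` of the extreme games. -/
def tildeV (n : ℕ) (v : Finset (Fin n) → ℝ) (S : Finset (Fin n)) : ℝ :=
  (∑ i : Fin n, extGame n v i S) / (n : ℝ)

/-- The centre of gravity `ẽ = (1/|E|) ∑_{T ∈ E} e_T` of the extreme rays
(minimal incomplete case). -/
def tildeEMin (n : ℕ) (S : Finset (Fin n)) : ℝ :=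
  (∑ T ∈ ESetMin n, eRay n T S) / ((ESetMin n).card : ℝ)

/-- The gap function `g^w(S) = b^w(S) - w(S)`. -/
def gapF (n : ℕ) (w : Finset (Fin n) → ℝ) (S : Finset (Fin n)) : ℝ :=
  (∑ i ∈ S, bvec n w i) - w S

/-- The τ-value of a 1-convex game: `τ_i(w) = b^w_i - g^w(N)/n`. -/
def tauVal (n : ℕ) (w : Finset (Fin n) → ℝ) (i : Fin n) : ℝ :=
  bvec n w i - gapF n w Finset.univ / (n : ℝ)

/-- The Shapley value. -/
def shapley (n : ℕ) (w : Finset (Fin n) → ℝ) (i : Fin n) : ℝ :=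
  ∑ S ∈ Finset.univ.filter (fun S : Finset (Fin n) => i ∈ S),
    ((Nat.factorial (S.card - 1) * Nat.factorial (n - S.card) : ℕ) : ℝ) /
        (Nat.factorial n : ℝ) * (w S - w (S \ {i}))

/-- The concession vector `λ^w_i = min_{S ∋ i} g^w(S)`. -/
def concession (n : ℕ) (w : Finset (Fin n) → ℝ) (i : Fin n) : ℝ :=
  (Finset.univ.filter (fun S : Finset (Fin n) => i ∈ S)).inf'
    ⟨{i}, by simp⟩ (gapF n w)

/-- The minimal right vector `a^w = b^w - λ^w`. -/
def minRight (n : ℕ) (w : Finset (Fin n) → ℝ) (i : Fin n) : ℝ :=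
  bvec n w i - concession n w i

/-- The average value `ζ̃_i(v) = v({i}) + Δ/n` of a minimal incomplete game. -/
def avgValue (n : ℕ) (v : Finset (Fin n) → ℝ) (i : Fin n) : ℝ :=
  v {i} + totalExcess n v / (n : ℝ)

/-- The zero-normalised game of a minimal incomplete game: value `Δ` on the
grand coalition and `0` on all other coalitions. -/
def zeroNorm (n : ℕ) (v : Finset (Fin n) → ℝ) (S : Finset (Fin n)) : ℝ :=
  if S = Finset.univ then totalExcess n v else 0

/-- The upper game `v̄` for incomplete games with defined upper vector. -/
def upperGameK (n : ℕ) (K : Finset (Finset (Fin n))) (v : Finset (Fin n) → ℝ)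
    (S : Finset (Fin n)) : ℝ :=
  if S ∈ K then v S else v Finset.univ - ∑ i ∈ Finset.univ \ S, bvec n v i

/-- The centre of gravity `ẽ = (1/|E|) ∑_{T ∉ K} e_T` of the extreme rays
(defined upper vector case), where `E = 2^N \ K`. -/
def tildeEK (n : ℕ) (K : Finset (Finset (Fin n))) (S : Finset (Fin n)) : ℝ :=
  (∑ T ∈ Finset.univ \ K, eRay n T S) / (((Finset.univ \ K).card : ℝ))

lemma univ_mem_Kmin (n : ℕ) : (Finset.univ : Finset (Fin n)) ∈ KminF n := by
  simp [KminF]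

lemma compl_not_Kmin {n : ℕ} (hn : 3 ≤ n) (k : Fin n) :
    (Finset.univ \ {k} : Finset (Fin n)) ∉ KminF n := by
  have hcard : (Finset.univ \ {k} : Finset (Fin n)).card = n - 1 := by
    rw [Finset.card_sdiff_of_subset (by simp)]; simp
  simp only [KminF, Finset.mem_union, Finset.mem_insert, Finset.mem_singleton,
    Finset.mem_image, Finset.mem_univ, true_and]
  push_neg
  refine ⟨⟨?_, ?_⟩, ?_⟩
  · rw [Finset.nonempty_iff_ne_empty]; intro h; rw [h] at hcard; simp at hcard; omega
  · intro h
    have hk := Finset.mem_univ k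
    rw [← h] at hk
    simp at hk
  · intro i h; rw [← h] at hcard; simp at hcard; omega

lemma tildeE_zero {n : ℕ} {S : Finset (Fin n)} (hS : S ∉ ESetMin n) :
    tildeEMin n S = 0 := by
  unfold tildeEMin
  rw [Finset.sum_eq_zero, zero_div]
  intro T hT
  unfold eRay
  rw [if_neg]
  rintro rfl; exact hS hT

lemma tildeE_univ (n : ℕ) : tildeEMin n Finset.univ = 0 := by
  apply tildeE_zero
  simp [ESetMin, univ_mem_Kmin]

lemma tildeE_compl (n : ℕ) (k : Fin n) : tildeEMin n (Finset.univ \ {k}) = 0 := by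
  apply tildeE_zero
  simp only [ESetMin, Finset.mem_sdiff, Finset.mem_union, Finset.mem_image,
    Finset.mem_univ, true_and, not_and, not_not]
  exact Or.inr ⟨k, rfl⟩

lemma tildeV_univ (n : ℕ) (hn : 3 ≤ n) (v : Finset (Fin n) → ℝ) :
    tildeV n v Finset.univ = v Finset.univ := by
  have hn0 : (n : ℝ) ≠ 0 := by positivity
  unfold tildeV extGame
  rw [Finset.sum_congr rfl (fun i _ => if_pos (univ_mem_Kmin n))]
  rw [Finset.sum_const, Finset.card_univ, Fintype.card_fin, nsmul_eq_mul]
  field_simp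

lemma tildeV_compl {n : ℕ} (hn : 3 ≤ n) (v : Finset (Fin n) → ℝ) (k : Fin n) :
    tildeV n v (Finset.univ \ {k}) =
      v Finset.univ - v {k} - totalExcess n v / (n : ℝ) := by
  have hn0 : (n : ℝ) ≠ 0 := by positivity
  have hdd : Finset.univ \ (Finset.univ \ ({k} : Finset (Fin n))) = {k} := by
    simp [Finset.sdiff_sdiff_self_left]
  have hsum : ∑ j ∈ Finset.univ \ (Finset.univ \ ({k} : Finset (Fin n))), v {j}
      = v {k} := by rw [hdd, Finset.sum_singleton]
  unfold tildeV
  have hterm : ∀ i : Fin n, extGame n v i (Finset.univ \ {k}) =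
      (v Finset.univ - v {k}) - (if i = k then totalExcess n v else 0) := by
    intro i
    unfold extGame
    rw [if_neg (compl_not_Kmin hn k), hsum]
    by_cases h : i = k
    · subst h
      rw [if_neg (by simp), if_pos rfl]
    · rw [if_pos (by simp [h]), if_neg h]
      ring
  rw [Finset.sum_congr rfl (fun i _ => hterm i), Finset.sum_sub_distrib,
    Finset.sum_const, Finset.sum_ite_eq' Finset.univ k (fun _ => totalExcess n v),
    if_pos (Finset.mem_univ k), Finset.card_univ, Fintype.card_fin, nsmul_eq_mul,
    sub_div]
  field_simp

lemma bvec_w {n : ℕ} (hn : 3 ≤ n) (v : Finset (Fin n) → ℝ) (k : Fin n) :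
    bvec n (fun S => tildeV n v S + tildeEMin n S) k =
      v {k} + totalExcess n v / (n : ℝ) := by
  unfold bvec
  dsimp only
  rw [tildeV_univ n hn v, tildeE_univ, tildeV_compl hn v k, tildeE_compl]
  ring

/-- the conic τ-value of a minimal incomplete game with `Δ ≥ 0`
and `n ≥ 3` players satisfies `τ_i(ṽ + ẽ) = v({i}) + Δ/n`. -/
theorem stmt_7 (n : ℕ) (hn : 3 ≤ n) (v : Finset (Fin n) → ℝ) (hv : v ∅ = 0)
    (hΔ : 0 ≤ totalExcess n v) :
    ∀ i : Fin n,
      tauVal n (fun S => tildeV n v S + tildeEMin n S) i =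
        v {i} + totalExcess n v / (n : ℝ) := by
  intro i
  have hn0 : (n : ℝ) ≠ 0 := by positivity
  unfold tauVal gapF
  dsimp only
  rw [bvec_w hn v i, Finset.sum_congr rfl (fun j _ => bvec_w hn v j)]
  rw [tildeV_univ n hn v, tildeE_univ]
  rw [Finset.sum_add_distrib, Finset.sum_const, Finset.card_univ, Fintype.card_fin,
    nsmul_eq_mul]
  unfold totalExcess
  field_simp
  ring
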